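/- If f:(0,∞)→(0,∞) is HH-convex, then for all x_1,…,x_n>0 and weights α_i ≥ 0 with ∑α_i=1, f((∑_i α_i/x_i)^{-1}) ≤ (∑_i α_i/f(x_i))^{-1}. -/

import Mathlib

theorem jensen_hh (f : ℝ → ℝ) (hf : ∀ x ∈ Set.Ioi (0:ℝ), 0 < f x)
    (hHH : ∀ x ∈ Set.Ioi (0:ℝ), ∀ y ∈ Set.Ioi (0:ℝ), ∀ α ∈ Set.Icc (0:ℝ) 1,
      f ((α / x + (1 - α) / y)⁻¹) ≤ (α / f x + (1 - α) / f y)⁻¹)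
    (n : ℕ) (x α : Fin n → ℝ) (hx : ∀ i, 0 < x i) (hα : ∀ i, 0 ≤ α i)
    (hsum : ∑ i, α i = 1) :
    f ((∑ i, α i / x i)⁻¹) ≤ (∑ i, α i / f (x i))⁻¹ := by
  set g : ℝ → ℝ := fun t => (f t⁻¹)⁻¹ with hg
  have hconc : ConcaveOn ℝ (Set.Ioi 0) g := by
    refine ⟨convex_Ioi 0, ?_⟩
    intro u hu v hv a b ha hb hab
    have hu' : (u:ℝ)⁻¹ ∈ Set.Ioi (0:ℝ) := Set.mem_Ioi.2 (inv_pos.2 hu)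
    have hv' : (v:ℝ)⁻¹ ∈ Set.Ioi (0:ℝ) := Set.mem_Ioi.2 (inv_pos.2 hv)
    have key := hHH u⁻¹ hu' v⁻¹ hv' a ⟨ha, by linarith⟩
    have hb' : (1:ℝ) - a = b := by linarith
    rw [hb', div_inv_eq_mul, div_inv_eq_mul] at key
    -- key : f ((a * u + b * v)⁻¹) ≤ (a / f u⁻¹ + b / f v⁻¹)⁻¹
    have hsumuv : 0 < a * u + b * v := by
      rcases eq_or_lt_of_le ha with h | h
      · have hbpos : 0 < b := by linarith
        have := mul_pos hbpos (Set.mem_Ioi.1 hv)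
        nlinarith [mul_nonneg ha (le_of_lt (Set.mem_Ioi.1 hu))]
      · nlinarith [mul_nonneg hb (le_of_lt (Set.mem_Ioi.1 hv)),
          mul_pos h (Set.mem_Ioi.1 hu)]
    have hfp : 0 < f ((a * u + b * v)⁻¹) := hf _ (inv_pos.2 hsumuv)
    have hC : 0 < a / f u⁻¹ + b / f v⁻¹ := by
      rcases eq_or_lt_of_le ha with h | h
      · have hbpos : 0 < b := by linarith
        have h1 : 0 < b / f v⁻¹ := div_pos hbpos (hf _ hv')
        have h2 : 0 ≤ a / f u⁻¹ := div_nonneg ha (le_of_lt (hf _ hu'))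
        linarith
      · have h1 : 0 < a / f u⁻¹ := div_pos h (hf _ hu')
        have h2 : 0 ≤ b / f v⁻¹ := div_nonneg hb (le_of_lt (hf _ hv'))
        linarith
    have := inv_anti₀ hfp key
    rw [inv_inv] at this
    -- goal: a • g u + b • g v ≤ g (a • u + b • v)
    simp only [hg, smul_eq_mul]
    calc a * (f u⁻¹)⁻¹ + b * (f v⁻¹)⁻¹ = a / f u⁻¹ + b / f v⁻¹ := by
          rw [div_eq_mul_inv, div_eq_mul_inv]
      _ ≤ (f ((a * u + b * v)⁻¹))⁻¹ := this
  have hmem : ∀ i ∈ Finset.univ, (fun i => (x i)⁻¹) i ∈ Set.Ioi (0:ℝ) :=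
    fun i _ => inv_pos.2 (hx i)
  have jensen := hconc.le_map_sum (fun i _ => hα i) (by simpa using hsum) hmem
  simp only [smul_eq_mul] at jensen
  -- jensen : ∑ i, α i * g (x i)⁻¹ ≤ g (∑ i, α i * (x i)⁻¹)
  have hL : ∑ i, α i * g (x i)⁻¹ = ∑ i, α i / f (x i) := by
    refine Finset.sum_congr rfl fun i _ => ?_
    simp [hg, inv_inv, div_eq_mul_inv]
  have hR : g (∑ i, α i * (x i)⁻¹) = (f ((∑ i, α i / x i)⁻¹))⁻¹ := by
    simp [hg, div_eq_mul_inv]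
  rw [hL, hR] at jensen
  -- jensen : ∑ i, α i / f (x i) ≤ (f ((∑ i, α i / x i)⁻¹))⁻¹
  have hex : ∃ i, 0 < α i := by
    by_contra h
    push_neg at h
    have : ∑ i, α i ≤ 0 := Finset.sum_nonpos (fun i _ => h i)
    linarith
  obtain ⟨j, hj⟩ := hex
  have hSx : 0 < ∑ i, α i / x i :=
    Finset.sum_pos' (fun i _ => div_nonneg (hα i) (le_of_lt (hx i)))
      ⟨j, Finset.mem_univ j, div_pos hj (hx j)⟩
  have hfp : 0 < f ((∑ i, α i / x i)⁻¹) := hf _ (inv_pos.2 hSx)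
  have hS : 0 < ∑ i, α i / f (x i) :=
    Finset.sum_pos' (fun i _ => div_nonneg (hα i) (le_of_lt (hf _ (hx i))))
      ⟨j, Finset.mem_univ j, div_pos hj (hf _ (hx j))⟩
  have := inv_anti₀ hS jensen
  rwa [inv_inv] at this
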